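/- Let s ∈ (0,1), n ≥ 1, and φ(x) = (1 − |x|²)₊^s on ℝⁿ. Let L = Σ_{i=1}^n (−∂²_i)^s be the sum of one-dimensional fractional Laplacians in the coordinate directions. Then Lφ(x) = c for every x ∈ B₁, where c = n·c₀ > 0 and c₀ is the constant such that the one-dimensional fractional Laplacian of (1−t²)₊^s equals c₀ on (−1,1). -/

import Mathlib

open Metric MeasureTheory Set
open scoped RealInnerProductSpace

noncomputable section

/-- The barrier `φ(x) = (1-|x|²)₊^s`. -/
def barrierFn (n : ℕ) (s : ℝ) (x : EuclideanSpace ℝ (Fin n)) : ℝ :=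
  (max (1 - ‖x‖ ^ 2) 0) ^ s

/-- The one-dimensional fractional Laplacian of `φ` in the `i`-th coordinate
direction, evaluated at `x`. -/
def fracLap1D (n : ℕ) (s : ℝ) (i : Fin n) (x : EuclideanSpace ℝ (Fin n)) : ℝ :=
  ∫ ρ in Set.Ioi (0 : ℝ),
    (2 * barrierFn n s x - barrierFn n s (x + ρ • EuclideanSpace.single i (1 : ℝ))
      - barrierFn n s (x - ρ • EuclideanSpace.single i (1 : ℝ))) / ρ ^ (1 + 2 * s)

/-- For `L = Σᵢ (−∂²ᵢ)^s` and `φ(x) = (1-|x|²)₊^s`, one has `Lφ ≡ n c₀ > 0`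
in `B₁`, where `c₀` is the constant value of the one-dimensional fractional
Laplacian of `(1-t²)₊^s` on `(-1,1)`. -/
theorem sum_one_dim_fracLap_of_barrier_constant
    (n : ℕ) (s c₀ : ℝ) (hs : s ∈ Set.Ioo (0 : ℝ) 1) (hc₀pos : 0 < c₀)
    (hc₀ : ∀ t ∈ Set.Ioo (-1 : ℝ) 1,
      (∫ ρ in Set.Ioi (0 : ℝ),
        (2 * (max (1 - t ^ 2) 0) ^ s - (max (1 - (t + ρ) ^ 2) 0) ^ s
          - (max (1 - (t - ρ) ^ 2) 0) ^ s) / ρ ^ (1 + 2 * s)) = c₀) :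
    ∀ x ∈ Metric.ball (0 : EuclideanSpace ℝ (Fin n)) 1,
      (∑ i : Fin n, fracLap1D n s i x) = n * c₀ := by
  intro x hx
  have hx1 : ‖x‖ < 1 := by simpa using hx
  have hx2 : ‖x‖ ^ 2 < 1 := by
    have := sq_lt_one_iff_abs_lt_one (a := ‖x‖)
    rw [this, abs_of_nonneg (norm_nonneg x)]
    exact hx1
  have key : ∀ i : Fin n, fracLap1D n s i x = c₀ := by
    intro i
    set t : ℝ := x i with ht
    set A : ℝ := 1 - ‖x‖ ^ 2 + t ^ 2 with hA
    have hApos : 0 < A := by nlinarith [sq_nonneg t]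
    set a : ℝ := Real.sqrt A with haDef
    have ha : 0 < a := Real.sqrt_pos.2 hApos
    have ha2 : a ^ 2 = A := Real.sq_sqrt hApos.le
    set τ : ℝ := t / a with hτdef
    have htτ : t = a * τ := by rw [hτdef, mul_div_assoc', eq_div_iff ha.ne', mul_comm]
    have hτmem : τ ∈ Set.Ioo (-1 : ℝ) 1 := by
      have h1 : τ ^ 2 < 1 := by
        rw [hτdef, div_pow, div_lt_one (by positivity)]
        nlinarith
      have := (sq_lt_one_iff_abs_lt_one (a := τ)).mp h1
      exact abs_lt.mp this
    -- barrier values along the line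
    have hnorm : ∀ ρ : ℝ,
        barrierFn n s (x + ρ • EuclideanSpace.single i (1 : ℝ))
          = (max (A - (t + ρ) ^ 2) 0) ^ s := by
      intro ρ
      have hin : ⟪x, ρ • EuclideanSpace.single i (1:ℝ)⟫ = ρ * t := by
        rw [real_inner_smul_right]; simp [EuclideanSpace.inner_single_right, ht]
      have hns : ‖ρ • EuclideanSpace.single i (1:ℝ)‖ ^ 2 = ρ ^ 2 := by
        rw [norm_smul]; simp [EuclideanSpace.norm_single, sq_abs]
      unfold barrierFn
      rw [norm_add_sq_real, hin, hns]
      congr 2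
      ring
    have hnorm' : ∀ ρ : ℝ,
        barrierFn n s (x - ρ • EuclideanSpace.single i (1 : ℝ))
          = (max (A - (t - ρ) ^ 2) 0) ^ s := by
      intro ρ
      have hin : ⟪x, ρ • EuclideanSpace.single i (1:ℝ)⟫ = ρ * t := by
        rw [real_inner_smul_right]; simp [EuclideanSpace.inner_single_right, ht]
      have hns : ‖ρ • EuclideanSpace.single i (1:ℝ)‖ ^ 2 = ρ ^ 2 := by
        rw [norm_smul]; simp [EuclideanSpace.norm_single, sq_abs]
      unfold barrierFn
      rw [norm_sub_sq_real, hin, hns]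
      congr 2
      ring
    have hb0 : barrierFn n s x = (max (A - t ^ 2) 0) ^ s := by
      unfold barrierFn
      congr 2
      rw [hA]; ring
    -- rescaling of the max
    have hmax : ∀ u : ℝ, max (A - (a * u) ^ 2) 0 = a ^ 2 * max (1 - u ^ 2) 0 := by
      intro u
      rw [mul_max_of_nonneg _ _ (sq_nonneg a), mul_zero]
      congr 1
      rw [← ha2]; ring
    have hB : (A : ℝ) ^ s = a ^ (2 * s) := by
      rw [← ha2, ← Real.rpow_natCast a 2, ← Real.rpow_mul ha.le]
      norm_num
    have hBpos : 0 < A ^ s := Real.rpow_pos_of_pos hApos s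
    -- the integrand
    set f : ℝ → ℝ := fun ρ =>
      (2 * barrierFn n s x - barrierFn n s (x + ρ • EuclideanSpace.single i (1 : ℝ))
        - barrierFn n s (x - ρ • EuclideanSpace.single i (1 : ℝ))) / ρ ^ (1 + 2 * s) with hf
    set g : ℝ → ℝ := fun σ =>
      (2 * (max (1 - τ ^ 2) 0) ^ s - (max (1 - (τ + σ) ^ 2) 0) ^ s
        - (max (1 - (τ - σ) ^ 2) 0) ^ s) / σ ^ (1 + 2 * s) with hg
    have hpt : ∀ σ ∈ Set.Ioi (0:ℝ), f (a * σ) = a⁻¹ * g σ := by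
      intro σ hσ
      have hσ0 : 0 < σ := hσ
      rw [hf, hg]
      simp only
      rw [hb0, hnorm, hnorm']
      have e0 : max (A - t ^ 2) 0 = a ^ 2 * max (1 - τ ^ 2) 0 := by
        rw [← hmax τ, ← htτ]
      have e1 : max (A - (t + a * σ) ^ 2) 0 = a ^ 2 * max (1 - (τ + σ) ^ 2) 0 := by
        rw [← hmax (τ + σ)]
        congr 3
        rw [htτ]; ring
      have e2 : max (A - (t - a * σ) ^ 2) 0 = a ^ 2 * max (1 - (τ - σ) ^ 2) 0 := by
        rw [← hmax (τ - σ)]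
        congr 3
        rw [htτ]; ring
      rw [e0, e1, e2,
        Real.mul_rpow (sq_nonneg a) (le_max_right _ _),
        Real.mul_rpow (sq_nonneg a) (le_max_right _ _),
        Real.mul_rpow (sq_nonneg a) (le_max_right _ _),
        Real.mul_rpow ha.le hσ0.le]
      have hA2s : (a ^ 2 : ℝ) ^ s = a ^ (2 * s) := by rw [ha2]; exact hB
      have haexp : a ^ (1 + 2 * s) = a * a ^ (2 * s) := by
        rw [Real.rpow_add ha, Real.rpow_one]
      rw [hA2s, haexp]
      have h2s : (0:ℝ) < a ^ (2 * s) := Real.rpow_pos_of_pos ha _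
      have hσs : (0:ℝ) < σ ^ (1 + 2 * s) := Real.rpow_pos_of_pos hσ0 _
      field_simp
    -- change of variables
    have hcv : ∫ σ in Set.Ioi (0:ℝ), f (a * σ) = a⁻¹ • ∫ ρ in Set.Ioi (0:ℝ), f ρ := by
      simpa using integral_comp_mul_left_Ioi f 0 ha
    have hleft : ∫ σ in Set.Ioi (0:ℝ), f (a * σ) = a⁻¹ * c₀ := by
      rw [setIntegral_congr_fun measurableSet_Ioi hpt]
      rw [integral_const_mul]
      rw [show (∫ σ in Set.Ioi (0:ℝ), g σ) = c₀ from hc₀ τ hτmem]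
    have : fracLap1D n s i x = ∫ ρ in Set.Ioi (0:ℝ), f ρ := rfl
    rw [this]
    have := hcv.symm.trans hleft
    rw [smul_eq_mul] at this
    have ha' : a⁻¹ ≠ 0 := inv_ne_zero ha.ne'
    field_simp at this
    linarith [this]
  simp only [key, Finset.sum_const, Finset.card_univ, Fintype.card_fin, nsmul_eq_mul]
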